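/- Let n ≥ 2 and let p be a positive probability vector on Fin n. For a permutation σ of Fin n define the Plackett–Luce weight w_p(σ) = Π_{i=0}^{n−1} p(σ(i)) / (Σ_{j=i}^{n−1} p(σ(j))). Then for all i ≠ j in Fin n, Σ_σ w_p(σ) · [σ⁻¹(i) < σ⁻¹(j)] = p(i)/(p(i)+p(j)), where the sum ranges over all permutations σ of Fin n and [·] is the 0/1 indicator. -/

import Mathlib

open Finset Equiv

noncomputable def PL {n : ℕ} (p : Fin n → ℝ) (σ : Equiv.Perm (Fin n)) : ℝ :=
  ∏ i : Fin n, p (σ i) / ∑ j ∈ Finset.univ.filter (fun j : Fin n => i ≤ j), p (σ j)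

lemma PL_decompose {n : ℕ} (p : Fin (n+1) → ℝ) (a : Fin (n+1)) (e : Equiv.Perm (Fin n)) :
    PL p (Equiv.Perm.decomposeFin.symm (a, e)) =
      (p a / ∑ i, p i) * PL (fun m => p (Equiv.swap 0 a m.succ)) e := by
  set σ := Equiv.Perm.decomposeFin.symm (a, e) with hσ
  unfold PL
  rw [Fin.prod_univ_succ]
  congr 1
  · -- first factor
    have h0 : σ 0 = a := Equiv.Perm.decomposeFin_symm_apply_zero a e
    have huniv : Finset.univ.filter (fun j : Fin (n+1) => (0 : Fin (n+1)) ≤ j) = Finset.univ := by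
      simp [Fin.zero_le]
    rw [h0, huniv, Equiv.sum_comp σ p]
  · apply Finset.prod_congr rfl
    intro i _
    have hnum : σ i.succ = Equiv.swap 0 a (e i).succ :=
      Equiv.Perm.decomposeFin_symm_apply_succ e a i
    have hden : ∑ j ∈ Finset.univ.filter (fun j : Fin (n+1) => i.succ ≤ j), p (σ j)
        = ∑ j ∈ Finset.univ.filter (fun j : Fin n => i ≤ j),
            p (Equiv.swap 0 a (e j).succ) := by
      rw [Finset.sum_filter, Finset.sum_filter, Fin.sum_univ_succ]
      have : ¬ (i.succ ≤ (0 : Fin (n+1))) := by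
        simp [Fin.le_zero_iff, Fin.succ_ne_zero]
      rw [if_neg this, zero_add]
      apply Finset.sum_congr rfl
      intro j _
      simp only [hσ, Equiv.Perm.decomposeFin_symm_apply_succ, Fin.succ_le_succ_iff]
    rw [hnum, hden]

lemma PL_norm : ∀ (n : ℕ) (p : Fin n → ℝ), (∀ i, 0 < p i) →
    ∑ σ : Equiv.Perm (Fin n), PL p σ = 1 := by
  intro n
  induction n with
  | zero =>
    intro p hp
    simp [PL]
  | succ n ih =>
    intro p hp
    have hS : 0 < ∑ i, p i := Finset.sum_pos (fun i _ => hp i) Finset.univ_nonempty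
    rw [← Equiv.sum_comp (Equiv.Perm.decomposeFin (n := n)).symm (PL p), Fintype.sum_prod_type]
    have : ∀ a : Fin (n+1), ∑ e : Equiv.Perm (Fin n),
        PL p (Equiv.Perm.decomposeFin.symm (a, e)) = p a / ∑ i, p i := by
      intro a
      calc ∑ e : Equiv.Perm (Fin n), PL p (Equiv.Perm.decomposeFin.symm (a, e))
          = ∑ e : Equiv.Perm (Fin n),
              (p a / ∑ i, p i) * PL (fun m => p (Equiv.swap 0 a m.succ)) e := by
            exact Finset.sum_congr rfl fun e _ => PL_decompose p a e
        _ = (p a / ∑ i, p i) * ∑ e, PL (fun m => p (Equiv.swap 0 a m.succ)) e := by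
            rw [Finset.mul_sum]
        _ = p a / ∑ i, p i := by
            rw [ih _ (fun m => hp _), mul_one]
    rw [Finset.sum_congr rfl fun a _ => this a, ← Finset.sum_div, div_self hS.ne']

lemma PL_pair : ∀ (n : ℕ) (p : Fin n → ℝ), (∀ i, 0 < p i) → ∀ i j : Fin n, i ≠ j →
    ∑ σ : Equiv.Perm (Fin n), PL p σ * (if σ⁻¹ i < σ⁻¹ j then (1 : ℝ) else 0) =
      p i / (p i + p j) := by
  intro n
  induction n with
  | zero => intro p hp i j hij; exact i.elim0
  | succ n ih =>
    intro p hp i j hij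
    have hS : 0 < ∑ k, p k := Finset.sum_pos (fun k _ => hp k) Finset.univ_nonempty
    set S := ∑ k, p k with hSdef
    set F : Fin (n+1) → ℝ := fun a => ∑ e : Equiv.Perm (Fin n),
      PL p (Equiv.Perm.decomposeFin.symm (a, e)) *
        (if (Equiv.Perm.decomposeFin.symm (a, e))⁻¹ i <
            (Equiv.Perm.decomposeFin.symm (a, e))⁻¹ j then (1 : ℝ) else 0) with hF
    have hsum : ∑ σ : Equiv.Perm (Fin (n+1)),
        PL p σ * (if σ⁻¹ i < σ⁻¹ j then (1 : ℝ) else 0) = ∑ a, F a := by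
      rw [← Equiv.sum_comp (Equiv.Perm.decomposeFin (n := n)).symm
        (fun σ => PL p σ * (if σ⁻¹ i < σ⁻¹ j then (1 : ℝ) else 0)), Fintype.sum_prod_type]
    -- key facts about inverse positions
    have hinv : ∀ (a : Fin (n+1)) (e : Equiv.Perm (Fin n)) (k : Fin (n+1))
        (h : Equiv.swap 0 a k ≠ 0),
        (Equiv.Perm.decomposeFin.symm (a, e))⁻¹ k =
          (e⁻¹ ((Equiv.swap 0 a k).pred h)).succ := by
      intro a e k h
      have hk : Equiv.Perm.decomposeFin.symm (a, e)
          ((e⁻¹ ((Equiv.swap 0 a k).pred h)).succ) = k := by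
        rw [Equiv.Perm.decomposeFin_symm_apply_succ, Equiv.Perm.coe_inv, Equiv.apply_symm_apply,
          Fin.succ_pred, Equiv.swap_apply_self]
      calc (Equiv.Perm.decomposeFin.symm (a, e))⁻¹ k
          = (Equiv.Perm.decomposeFin.symm (a, e))⁻¹
              (Equiv.Perm.decomposeFin.symm (a, e)
                ((e⁻¹ ((Equiv.swap 0 a k).pred h)).succ)) := by rw [hk]
        _ = _ := Equiv.symm_apply_apply _ _
    -- case a = i
    have hFi : F i = p i / S := by
      simp only [hF]
      have : ∀ e : Equiv.Perm (Fin n),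
          PL p (Equiv.Perm.decomposeFin.symm (i, e)) *
            (if (Equiv.Perm.decomposeFin.symm (i, e))⁻¹ i <
                (Equiv.Perm.decomposeFin.symm (i, e))⁻¹ j then (1 : ℝ) else 0)
          = PL p (Equiv.Perm.decomposeFin.symm (i, e)) := by
        intro e
        have h0 : (Equiv.Perm.decomposeFin.symm (i, e))⁻¹ i = 0 := by
          have : Equiv.Perm.decomposeFin.symm (i, e) 0 = i :=
            Equiv.Perm.decomposeFin_symm_apply_zero i e
          calc (Equiv.Perm.decomposeFin.symm (i, e))⁻¹ i
              = (Equiv.Perm.decomposeFin.symm (i, e))⁻¹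
                  (Equiv.Perm.decomposeFin.symm (i, e) 0) := by rw [this]
            _ = 0 := Equiv.symm_apply_apply _ _
        have hj0 : (Equiv.Perm.decomposeFin.symm (i, e))⁻¹ j ≠ 0 := by
          intro h
          apply hij
          have := congrArg (Equiv.Perm.decomposeFin.symm (i, e)) h
          rw [Equiv.Perm.coe_inv, Equiv.apply_symm_apply, Equiv.Perm.decomposeFin_symm_apply_zero] at this
          exact this.symm
        rw [h0, if_pos (Fin.pos_of_ne_zero hj0), mul_one]
      rw [Finset.sum_congr rfl fun e _ => this e]
      calc ∑ e : Equiv.Perm (Fin n), PL p (Equiv.Perm.decomposeFin.symm (i, e))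
          = ∑ e : Equiv.Perm (Fin n),
              (p i / S) * PL (fun m => p (Equiv.swap 0 i m.succ)) e :=
            Finset.sum_congr rfl fun e _ => PL_decompose p i e
        _ = (p i / S) * ∑ e, PL (fun m => p (Equiv.swap 0 i m.succ)) e := by
            rw [Finset.mul_sum]
        _ = p i / S := by rw [PL_norm n _ (fun m => hp _), mul_one]
    -- case a = j
    have hFj : F j = 0 := by
      simp only [hF]
      apply Finset.sum_eq_zero
      intro e _
      have h0 : (Equiv.Perm.decomposeFin.symm (j, e))⁻¹ j = 0 := by
        have : Equiv.Perm.decomposeFin.symm (j, e) 0 = j :=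
          Equiv.Perm.decomposeFin_symm_apply_zero j e
        calc (Equiv.Perm.decomposeFin.symm (j, e))⁻¹ j
            = (Equiv.Perm.decomposeFin.symm (j, e))⁻¹
                (Equiv.Perm.decomposeFin.symm (j, e) 0) := by rw [this]
          _ = 0 := Equiv.symm_apply_apply _ _
      rw [h0]
      rw [if_neg (by simp [Fin.le_zero_iff]), mul_zero]
    -- case a ∉ {i, j}
    have hFa : ∀ a : Fin (n+1), a ≠ i → a ≠ j → F a = (p a / S) * (p i / (p i + p j)) := by
      intro a hai haj
      have hswap_i : Equiv.swap 0 a i ≠ 0 := by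
        intro h
        apply hai
        have := congrArg (Equiv.swap 0 a) h
        rw [Equiv.swap_apply_self, Equiv.swap_apply_left] at this
        exact this.symm
      have hswap_j : Equiv.swap 0 a j ≠ 0 := by
        intro h
        apply haj
        have := congrArg (Equiv.swap 0 a) h
        rw [Equiv.swap_apply_self, Equiv.swap_apply_left] at this
        exact this.symm
      set i' := (Equiv.swap 0 a i).pred hswap_i with hi'
      set j' := (Equiv.swap 0 a j).pred hswap_j with hj'
      have hij' : i' ≠ j' := by
        intro h
        apply hij
        have := congrArg Fin.succ h
        rw [hi', hj', Fin.succ_pred, Fin.succ_pred] at this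
        exact (Equiv.swap 0 a).injective this
      set q : Fin n → ℝ := fun m => p (Equiv.swap 0 a m.succ) with hq
      have hqi : q i' = p i := by
        rw [hq, hi']
        simp only [Fin.succ_pred, Equiv.swap_apply_self]
      have hqj : q j' = p j := by
        rw [hq, hj']
        simp only [Fin.succ_pred, Equiv.swap_apply_self]
      have hstep : ∀ e : Equiv.Perm (Fin n),
          PL p (Equiv.Perm.decomposeFin.symm (a, e)) *
            (if (Equiv.Perm.decomposeFin.symm (a, e))⁻¹ i <
                (Equiv.Perm.decomposeFin.symm (a, e))⁻¹ j then (1 : ℝ) else 0)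
          = (p a / S) * (PL q e * (if e⁻¹ i' < e⁻¹ j' then (1 : ℝ) else 0)) := by
        intro e
        have hi2 := hinv a e i hswap_i
        have hj2 := hinv a e j hswap_j
        rw [PL_decompose p a e, hi2, hj2]
        simp only [Fin.succ_lt_succ_iff, ← hi', ← hj', ← hq, ← hSdef]
        ring
      simp only [hF]
      rw [Finset.sum_congr rfl fun e _ => hstep e, ← Finset.mul_sum,
        ih q (fun m => hp _) i' j' hij', hqi, hqj]
    -- combine
    have hmem : j ∈ (Finset.univ : Finset (Fin (n+1))).erase i := by
      simp [Ne.symm hij]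
    rw [hsum, ← Finset.add_sum_erase _ F (Finset.mem_univ i),
      ← Finset.add_sum_erase _ F hmem, hFi, hFj, zero_add]
    have hrest : ∑ a ∈ ((Finset.univ : Finset (Fin (n+1))).erase i).erase j, F a
        = ∑ a ∈ ((Finset.univ : Finset (Fin (n+1))).erase i).erase j,
            (p a / S) * (p i / (p i + p j)) := by
      apply Finset.sum_congr rfl
      intro a ha
      have haj : a ≠ j := Finset.ne_of_mem_erase ha
      have hai : a ≠ i := Finset.ne_of_mem_erase (Finset.mem_of_mem_erase ha)
      exact hFa a hai haj
    rw [hrest]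
    have hsum_rest : ∑ a ∈ ((Finset.univ : Finset (Fin (n+1))).erase i).erase j, p a
        = S - p i - p j := by
      have h1 : ∑ a ∈ (Finset.univ : Finset (Fin (n+1))).erase i, p a = S - p i := by
        rw [hSdef, ← Finset.add_sum_erase _ p (Finset.mem_univ i)]
        ring
      rw [← Finset.add_sum_erase _ p hmem] at h1
      linarith
    have : ∑ a ∈ ((Finset.univ : Finset (Fin (n+1))).erase i).erase j,
        (p a / S) * (p i / (p i + p j))
        = ((S - p i - p j) / S) * (p i / (p i + p j)) := by
      rw [← hsum_rest, Finset.sum_div, Finset.sum_mul]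
    rw [this]
    have hpij : 0 < p i + p j := by have := hp i; have := hp j; linarith
    field_simp
    ring

/-- **Lemma 5 (situational expert graph to rankings).** For a positive probability vector
`p` on `Fin n` (`n ≥ 2`), the Plackett–Luce distribution
`w_p σ = ∏_{i} p (σ i) / (∑_{j ≥ i} p (σ j))` on rankings reproduces the pairwise opinions:
for all `i ≠ j`, `∑_σ w_p σ · [σ⁻¹ i < σ⁻¹ j] = p i / (p i + p j)`. -/
theorem plackettLuce_reproduces_pairwise_opinions (n : ℕ) (hn : 2 ≤ n)
    (p : Fin n → ℝ) (hp : ∀ i, 0 < p i) (hsum : ∑ i, p i = 1)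
    (w : Equiv.Perm (Fin n) → ℝ)
    (hw : ∀ σ : Equiv.Perm (Fin n),
      w σ = ∏ i : Fin n,
        p (σ i) / ∑ j ∈ Finset.univ.filter (fun j : Fin n => i ≤ j), p (σ j)) :
    ∀ i j : Fin n, i ≠ j →
      ∑ σ : Equiv.Perm (Fin n), w σ * (if σ⁻¹ i < σ⁻¹ j then (1 : ℝ) else 0) =
        p i / (p i + p j) := by
  intro i j hij
  have : ∀ σ : Equiv.Perm (Fin n), w σ = PL p σ := fun σ => hw σ
  rw [Finset.sum_congr rfl fun σ _ => by rw [this σ]]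
  exact PL_pair n p hp i j hij
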